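/- Let A = max_{1 ≤ i ≤ C} max(0, i − c¹(i) − c²(i)). Then the maximum of |S¹ ∪ S²| over all valid assignments (S¹, S²) equals C − A. (Two-link version of Lemma 1 of the paper: the minimum number of base-layer skips over all assignments of whole chunks to the two links equals A, and it is attained.) -/

import Mathlib

/-- One greedy step: try to give chunk `i` to link 1, else link 2, else skip. -/
def glStep (c1 c2 : ℕ → ℕ) (i : ℕ) (p : ℕ × ℕ) : ℕ × ℕ :=
  if p.1 < c1 i then (p.1 + 1, p.2) else if p.2 < c2 i then (p.1, p.2 + 1) else p

/-- Counts of chunks assigned to each link after processing the first `i` chunks. -/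
def glF (c1 c2 : ℕ → ℕ) : ℕ → ℕ × ℕ
  | 0 => (0, 0)
  | i + 1 => glStep c1 c2 (i + 1) (glF c1 c2 i)

lemma glF_cases (c1 c2 : ℕ → ℕ) (i : ℕ) :
    (glF c1 c2 (i+1) = ((glF c1 c2 i).1 + 1, (glF c1 c2 i).2) ∧ (glF c1 c2 i).1 < c1 (i+1)) ∨
    (glF c1 c2 (i+1) = ((glF c1 c2 i).1, (glF c1 c2 i).2 + 1) ∧ ¬ (glF c1 c2 i).1 < c1 (i+1)
        ∧ (glF c1 c2 i).2 < c2 (i+1)) ∨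
    (glF c1 c2 (i+1) = glF c1 c2 i ∧ c1 (i+1) ≤ (glF c1 c2 i).1 ∧ c2 (i+1) ≤ (glF c1 c2 i).2) := by
  simp only [glF, glStep]
  split_ifs with h1 h2
  · exact Or.inl ⟨rfl, h1⟩
  · exact Or.inr (Or.inl ⟨rfl, h1, h2⟩)
  · exact Or.inr (Or.inr ⟨rfl, by omega, by omega⟩)


/-- `(S¹, S²)` is a valid assignment of chunks to the two links: `S¹, S²` are disjoint
subsets of `{1,…,C}` and, for every `i ∈ {1,…,C}` and each link `k`, the number of
chunks of `S^k` among the first `i` is at most the per-deadline capacity `c^k(i)`. -/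
def ValidAssignment (C : ℕ) (c1 c2 : ℕ → ℕ) (S1 S2 : Finset ℕ) : Prop :=
  S1 ⊆ Finset.Icc 1 C ∧ S2 ⊆ Finset.Icc 1 C ∧ Disjoint S1 S2 ∧
  (∀ i ∈ Finset.Icc 1 C, (S1 ∩ Finset.Icc 1 i).card ≤ c1 i) ∧
  (∀ i ∈ Finset.Icc 1 C, (S2 ∩ Finset.Icc 1 i).card ≤ c2 i)

/-- Two-link version of Lemma 1: with
`A = max_{1≤i≤C} max(0, i − c¹(i) − c²(i))` (natural subtraction realizes `max(0,·)`),
the maximum of `|S¹ ∪ S²|` over all valid assignments `(S¹, S²)` equals `C − A`;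
i.e., the minimum number of base-layer skips equals `A` and it is attained. -/
theorem two_link_min_skips
    (C : ℕ) (hC : 1 ≤ C) (c1 c2 : ℕ → ℕ)
    (hc1 : ∀ i i', 1 ≤ i → i ≤ i' → i' ≤ C → c1 i ≤ c1 i')
    (hc2 : ∀ i i', 1 ≤ i → i ≤ i' → i' ≤ C → c2 i ≤ c2 i')
    (A : ℕ) (hA : A = (Finset.Icc 1 C).sup (fun i => i - (c1 i + c2 i))) :
    IsGreatest {n : ℕ | ∃ S1 S2 : Finset ℕ,
      ValidAssignment C c1 c2 S1 S2 ∧ (S1 ∪ S2).card = n} (C - A) := by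
  -- bounds invariant for the greedy counters
  have hb : ∀ i, i ≤ C → (glF c1 c2 i).1 ≤ c1 i ∧ (glF c1 c2 i).2 ≤ c2 i := by
    intro i
    induction i with
    | zero => intro _; constructor <;> simp [glF]
    | succ i ih =>
      intro hiC
      have ih' := ih (by omega)
      have hm1 : (glF c1 c2 i).1 ≤ c1 (i + 1) := by
        rcases Nat.eq_zero_or_pos i with h0 | h0
        · subst h0; simp [glF]
        · exact le_trans ih'.1 (hc1 i (i + 1) h0 (by omega) hiC)
      have hm2 : (glF c1 c2 i).2 ≤ c2 (i + 1) := by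
        rcases Nat.eq_zero_or_pos i with h0 | h0
        · subst h0; simp [glF]
        · exact le_trans ih'.2 (hc2 i (i + 1) h0 (by omega) hiC)
      rcases glF_cases c1 c2 i with ⟨he, h⟩ | ⟨he, h1, h⟩ | ⟨he, h1, h2⟩ <;>
        rw [he] <;> constructor <;> (try simp) <;> omega
  -- total invariant : assigned + running deficit = i
  have hT : ∀ i, i ≤ C →
      (glF c1 c2 i).1 + (glF c1 c2 i).2 + (Finset.Icc 1 i).sup (fun j => j - (c1 j + c2 j)) = i := by
    intro i
    induction i with
    | zero => intro _; simp [glF]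
    | succ i ih =>
      intro hiC
      have ih' := ih (by omega)
      have hsup : (Finset.Icc 1 (i + 1)).sup (fun j => j - (c1 j + c2 j)) =
          max ((i + 1) - (c1 (i + 1) + c2 (i + 1)))
            ((Finset.Icc 1 i).sup (fun j => j - (c1 j + c2 j))) := by
        rw [← Finset.insert_Icc_right_eq_Icc_add_one (by omega), Finset.sup_insert]
      have hb' := hb i (by omega)
      have hm1 : (glF c1 c2 i).1 ≤ c1 (i + 1) := by
        rcases Nat.eq_zero_or_pos i with h0 | h0
        · subst h0; simp [glF]
        · exact le_trans hb'.1 (hc1 i (i + 1) h0 (by omega) hiC)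
      have hm2 : (glF c1 c2 i).2 ≤ c2 (i + 1) := by
        rcases Nat.eq_zero_or_pos i with h0 | h0
        · subst h0; simp [glF]
        · exact le_trans hb'.2 (hc2 i (i + 1) h0 (by omega) hiC)
      rcases glF_cases c1 c2 i with ⟨he, h⟩ | ⟨he, h1, h⟩ | ⟨he, h1, h2⟩ <;>
        rw [he, hsup] <;> (try simp) <;> omega
  -- the greedy sets
  set S1 : Finset ℕ :=
    (Finset.Icc 1 C).filter (fun j => (glF c1 c2 (j - 1)).1 < (glF c1 c2 j).1) with hS1def
  set S2 : Finset ℕ :=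
    (Finset.Icc 1 C).filter (fun j => (glF c1 c2 (j - 1)).2 < (glF c1 c2 j).2) with hS2def
  have hint : ∀ (p : ℕ → Prop) [DecidablePred p], ∀ i, i ≤ C →
      (Finset.Icc 1 C).filter p ∩ Finset.Icc 1 i = (Finset.Icc 1 i).filter p := by
    intro p _ i hi
    ext j
    simp only [Finset.mem_inter, Finset.mem_filter, Finset.mem_Icc]
    have : j ≤ i → j ≤ C := fun h => le_trans h hi
    tauto
  -- card of filtered intervals equals the counters
  have hcard : ∀ i, i ≤ C →
      ((Finset.Icc 1 i).filter (fun j => (glF c1 c2 (j - 1)).1 < (glF c1 c2 j).1)).card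
        = (glF c1 c2 i).1 ∧
      ((Finset.Icc 1 i).filter (fun j => (glF c1 c2 (j - 1)).2 < (glF c1 c2 j).2)).card
        = (glF c1 c2 i).2 := by
    intro i
    induction i with
    | zero => intro _; simp [glF]
    | succ i ih =>
      intro hiC
      have ih' := ih (by omega)
      have hnot : (i + 1) ∉ Finset.Icc 1 i := by simp
      have hstep : ∀ (p : ℕ → Prop) [DecidablePred p],
          ((Finset.Icc 1 (i + 1)).filter p).card =
            ((Finset.Icc 1 i).filter p).card + (if p (i + 1) then 1 else 0) := by
        intro p _
        rw [← Finset.insert_Icc_right_eq_Icc_add_one (by omega), Finset.filter_insert]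
        split_ifs with h
        · rw [Finset.card_insert_of_notMem (fun hmem => hnot (Finset.filter_subset _ _ hmem))]
        · simp
      rw [hstep, hstep]
      have hred : i + 1 - 1 = i := by omega
      rcases glF_cases c1 c2 i with ⟨he, h⟩ | ⟨he, h1, h⟩ | ⟨he, h1, h2⟩ <;>
        rw [he] <;> constructor <;> simp [hred, he] <;> omega
  have hdisj : Disjoint S1 S2 := by
    rw [Finset.disjoint_left]
    intro j hj1 hj2
    rw [hS1def, Finset.mem_filter] at hj1
    rw [hS2def, Finset.mem_filter] at hj2
    obtain ⟨hjC, hj1'⟩ := hj1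
    obtain ⟨_, hj2'⟩ := hj2
    rw [Finset.mem_Icc] at hjC
    obtain ⟨k, rfl⟩ : ∃ k, j = k + 1 := ⟨j - 1, by omega⟩
    have hred : k + 1 - 1 = k := by omega
    rw [hred] at hj1' hj2'
    rcases glF_cases c1 c2 k with ⟨he, h⟩ | ⟨he, h1, h⟩ | ⟨he, h1, h2⟩ <;> rw [he] at hj1' hj2' <;>
      simp at hj1' hj2' <;> omega
  have hS1C : S1 ⊆ Finset.Icc 1 C := Finset.filter_subset _ _
  have hS2C : S2 ⊆ Finset.Icc 1 C := Finset.filter_subset _ _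
  constructor
  · -- membership : the greedy assignment attains C - A
    refine ⟨S1, S2, ⟨hS1C, hS2C, hdisj, ?_, ?_⟩, ?_⟩
    · intro i hi
      rw [Finset.mem_Icc] at hi
      rw [hS1def, hint _ i hi.2, (hcard i hi.2).1]
      exact (hb i hi.2).1
    · intro i hi
      rw [Finset.mem_Icc] at hi
      rw [hS2def, hint _ i hi.2, (hcard i hi.2).2]
      exact (hb i hi.2).2
    · rw [Finset.card_union_of_disjoint hdisj]
      have e1 : S1.card = (glF c1 c2 C).1 := (hcard C le_rfl).1
      have e2 : S2.card = (glF c1 c2 C).2 := (hcard C le_rfl).2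
      have := hT C le_rfl
      rw [← hA] at this
      omega
  · -- upper bound
    rintro n ⟨T1, T2, ⟨hT1C, hT2C, hTdisj, hb1, hb2⟩, rfl⟩
    have hne : (Finset.Icc 1 C).Nonempty := ⟨1, by simp [hC]⟩
    obtain ⟨i₀, hi₀mem, hi₀⟩ := Finset.exists_mem_eq_sup (Finset.Icc 1 C) hne
      (fun i => i - (c1 i + c2 i))
    rw [← hA] at hi₀
    rw [Finset.mem_Icc] at hi₀mem
    have hU : T1 ∪ T2 ⊆ Finset.Icc 1 C := Finset.union_subset hT1C hT2C
    have h3 : (T1 ∪ T2).card ≤ C := by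
      have := Finset.card_le_card hU
      simpa using this
    have h1 : ((T1 ∪ T2) ∩ Finset.Icc 1 i₀).card ≤ c1 i₀ + c2 i₀ := by
      rw [Finset.union_inter_distrib_right]
      calc (T1 ∩ Finset.Icc 1 i₀ ∪ T2 ∩ Finset.Icc 1 i₀).card
          ≤ (T1 ∩ Finset.Icc 1 i₀).card + (T2 ∩ Finset.Icc 1 i₀).card :=
            Finset.card_union_le _ _
        _ ≤ c1 i₀ + c2 i₀ :=
            add_le_add (hb1 i₀ (by simp [Finset.mem_Icc]; omega))
              (hb2 i₀ (by simp [Finset.mem_Icc]; omega))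
    have h2 : ((T1 ∪ T2) \ Finset.Icc 1 i₀).card ≤ C - i₀ := by
      have hsub : (T1 ∪ T2) \ Finset.Icc 1 i₀ ⊆ Finset.Icc (i₀ + 1) C := by
        intro j hj
        rw [Finset.mem_sdiff] at hj
        have := hU hj.1
        rw [Finset.mem_Icc] at this ⊢
        have := hj.2
        rw [Finset.mem_Icc] at this
        omega
      have := Finset.card_le_card hsub
      rw [Nat.card_Icc] at this
      omega
    have h4 : ((T1 ∪ T2) ∩ Finset.Icc 1 i₀).card + ((T1 ∪ T2) \ Finset.Icc 1 i₀).card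
        = (T1 ∪ T2).card := Finset.card_inter_add_card_sdiff _ _
    omega
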